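/- arXiv:2305.09906 — 2 statements merged into one kernel-verified Lean document; each statement's English description precedes it below -/
import Mathlib

section
/- Suppose n = 2m. For any potential outcome table w and any t > 0, the Neyman estimator under the uniform random balanced assignment satisfies the tail bound P(|T(w, Z) − τ(w)| ≥ t) ≤ 2 exp(−t² n / 8). Consequently, for any observed data, any table w with |T(Y,Z) − τ(w)| ≥ √(8 log(2/α)/n) has permutation p-value p(w, Y, Z) < α. -/
open Finset

/-- Real value of a binary outcome. -/
noncomputable def b2r (b : Bool) : ℝ := if b then 1 else 0

/-- All assignments of `n` subjects in which exactly `m` receive treatment. -/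
def Assign (n m : ℕ) : Finset (Fin n → Bool) :=
  Finset.univ.filter fun z => (Finset.univ.filter fun i => z i = true).card = m

/-- Probability of the event `E` under the uniform distribution on `Assign n m`. -/
noncomputable def Pr (n m : ℕ) (E : (Fin n → Bool) → Prop) : ℝ :=
  haveI : DecidablePred E := fun z => Classical.propDecidable (E z)
  (((Assign n m).filter E).card : ℝ) / ((Assign n m).card : ℝ)

/-- The sample average treatment effect `τ(w)`.  For a table `w`, `(w i).1` is the
control potential outcome `w_i(0)` and `(w i).2` is the treatment potential outcome
`w_i(1)`. -/
noncomputable def sate (n : ℕ) (w : Fin n → Bool × Bool) : ℝ :=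
  (∑ j, (b2r (w j).2 - b2r (w j).1)) / (n : ℝ)

/-- Observed outcomes generated by the table `w` under the assignment `z`. -/
def obsOutcome (n : ℕ) (w : Fin n → Bool × Bool) (z : Fin n → Bool) : Fin n → Bool :=
  fun j => if z j then (w j).2 else (w j).1

/-- The Neyman difference-in-means estimator `T(Y, z)`. -/
noncomputable def neyman (n m : ℕ) (Y z : Fin n → Bool) : ℝ :=
  (∑ j, if z j then b2r (Y j) else 0) / (m : ℝ)
    - (∑ j, if z j then 0 else b2r (Y j)) / ((n : ℝ) - (m : ℝ))

/-- Permutation `p`-value of the table `w` given observed data `(Y, z)`. -/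
noncomputable def pval (n m : ℕ) (w : Fin n → Bool × Bool) (Y z : Fin n → Bool) : ℝ :=
  Pr n m fun z' =>
    |neyman n m (obsOutcome n w z') z' - sate n w| ≥ |neyman n m Y z - sate n w|

/-- The table `w` is possible given the observed data `(Y, z)`. -/
def PossibleTable (n : ℕ) (w : Fin n → Bool × Bool) (Y z : Fin n → Bool) : Prop :=
  ∀ j, (z j = true → (w j).2 = Y j) ∧ (z j = false → (w j).1 = Y j)

/-- Lower endpoint `L_α` of the exact confidence interval `I_α`. -/
noncomputable def Lb (n m : ℕ) (α : ℝ) (Y z : Fin n → Bool) : ℝ :=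
  sInf {t : ℝ | ∃ w, PossibleTable n w Y z ∧ α ≤ pval n m w Y z ∧ sate n w = t}

/-- Upper endpoint `U_α` of the exact confidence interval `I_α`. -/
noncomputable def Ub (n m : ℕ) (α : ℝ) (Y z : Fin n → Bool) : ℝ :=
  sSup {t : ℝ | ∃ w, PossibleTable n w Y z ∧ α ≤ pval n m w Y z ∧ sate n w = t}

/-- `vcount n w a b` is the number of subjects whose treatment potential outcome is `a`
and whose control potential outcome is `b`; e.g. `vcount n w true false = v₁₀`. -/
def vcount (n : ℕ) (w : Fin n → Bool × Bool) (a b : Bool) : ℕ :=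
  (Finset.univ.filter fun i => (w i).2 = a ∧ (w i).1 = b).card

/-- `ncount n Y z a b = n_{ab}`, the number of subjects with assignment `a` and
observed outcome `b`. -/
def ncount (n : ℕ) (Y z : Fin n → Bool) (a b : Bool) : ℕ :=
  (Finset.univ.filter fun j => z j = a ∧ Y j = b).card

/-- The pmf of the Neyman estimator `T(w, Z)` under the uniform random assignment. -/
noncomputable def pmfT (n m : ℕ) (w : Fin n → Bool × Bool) : ℝ → ℝ :=
  fun t => Pr n m fun z => neyman n m (obsOutcome n w z) z = t

/-- The lattice `m⁻¹ ℤ ⊆ ℝ`. -/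
def lattZ (m : ℕ) : Set ℝ := {x | ∃ k : ℤ, x = (k : ℝ) / (m : ℝ)}

/-- The lattice `m⁻¹ (2ℤ) ⊆ ℝ`. -/
def lattEven (m : ℕ) : Set ℝ := {x | ∃ k : ℤ, x = (2 * (k : ℝ)) / (m : ℝ)}

/-- The lattice `m⁻¹ (2ℤ + 1) ⊆ ℝ`. -/
def lattOdd (m : ℕ) : Set ℝ := {x | ∃ k : ℤ, x = (2 * (k : ℝ) + 1) / (m : ℝ)}

/-- `f` is symmetric about `μ` and decreasing away from `μ` along the lattice `L`
(symmetric–decreasing, SD). -/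
def SDon (f : ℝ → ℝ) (L : Set ℝ) (μ : ℝ) : Prop :=
  (∀ x : ℝ, μ + x ∈ L → f (μ - x) = f (μ + x)) ∧
    ∀ x y : ℝ, 0 ≤ x → x ≤ y → μ + x ∈ L → μ + y ∈ L → f (μ + y) ≤ f (μ + x)


private lemma rad1 {m : ℕ} (hm : 0 < m) (b : Fin m → ℝ) (hb : ∀ i, |b i| ≤ 1)
    {s : ℝ} (hs : 0 < s) :
    (((univ : Finset (Fin m → Bool)).filter
        fun ε => s ≤ ∑ i, if ε i then b i else -b i).card : ℝ) ≤
      Real.exp (-(s ^ 2 / (2 * m))) * 2 ^ m := by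
  have hm' : (0:ℝ) < m := by exact_mod_cast hm
  set lam : ℝ := s / m with hlamdef
  have hlam : 0 < lam := div_pos hs hm'
  set S : (Fin m → Bool) → ℝ := fun ε => ∑ i, if ε i then b i else -b i with hS
  have key : (((univ.filter fun ε => s ≤ S ε)).card : ℝ) * Real.exp (lam * s)
      ≤ ∑ ε : Fin m → Bool, Real.exp (lam * S ε) := by
    have h1 : ((univ.filter fun ε => s ≤ S ε)).card • Real.exp (lam * s)
        ≤ ∑ ε ∈ univ.filter fun ε => s ≤ S ε, Real.exp (lam * S ε) := by
      apply Finset.card_nsmul_le_sum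
      intro ε hε
      simp only [mem_filter, mem_univ, true_and] at hε
      exact Real.exp_le_exp.2 (mul_le_mul_of_nonneg_left hε hlam.le)
    have h2 : ∑ ε ∈ univ.filter fun ε => s ≤ S ε, Real.exp (lam * S ε)
        ≤ ∑ ε : Fin m → Bool, Real.exp (lam * S ε) :=
      Finset.sum_le_sum_of_subset_of_nonneg (Finset.filter_subset _ _)
        (fun _ _ _ => (Real.exp_pos _).le)
    calc (((univ.filter fun ε => s ≤ S ε)).card : ℝ) * Real.exp (lam * s)
        = ((univ.filter fun ε => s ≤ S ε)).card • Real.exp (lam * s) := by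
          rw [nsmul_eq_mul]
      _ ≤ _ := h1.trans h2
  have expand : ∑ ε : Fin m → Bool, Real.exp (lam * S ε)
      = ∏ i, (Real.exp (lam * b i) + Real.exp (lam * -b i)) := by
    have h1 : ∀ ε : Fin m → Bool, Real.exp (lam * S ε)
        = ∏ i, Real.exp (lam * (if ε i then b i else -b i)) := by
      intro ε
      rw [← Real.exp_sum, ← Finset.mul_sum]
    simp_rw [h1]
    have h2 := Finset.prod_univ_sum (fun _ : Fin m => (univ : Finset Bool))
      (fun i c => Real.exp (lam * (if c then b i else -b i)))
    rw [Fintype.piFinset_univ] at h2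
    rw [← h2]
    apply Finset.prod_congr rfl
    intro i _
    rw [Fintype.sum_bool]
    simp
  have factor_bd : ∀ i : Fin m, Real.exp (lam * b i) + Real.exp (lam * -b i)
      ≤ 2 * Real.exp (lam ^ 2 / 2) := by
    intro i
    have h1 : Real.exp (lam * b i) + Real.exp (lam * -b i) = 2 * Real.cosh (lam * b i) := by
      rw [Real.cosh_eq, mul_neg]; ring
    rw [h1]
    have h2 : Real.cosh (lam * b i) ≤ Real.exp ((lam * b i) ^ 2 / 2) :=
      Real.cosh_le_exp_half_sq _
    have h3 : (lam * b i) ^ 2 ≤ lam ^ 2 := by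
      have : (b i) ^ 2 ≤ 1 := by
        rw [sq_le_one_iff_abs_le_one]; exact hb i
      calc (lam * b i) ^ 2 = lam ^ 2 * (b i) ^ 2 := by ring
        _ ≤ lam ^ 2 * 1 := by nlinarith [sq_nonneg lam]
        _ = lam ^ 2 := by ring
    have h4 : Real.exp ((lam * b i) ^ 2 / 2) ≤ Real.exp (lam ^ 2 / 2) :=
      Real.exp_le_exp.2 (by linarith)
    linarith [h2.trans h4]
  have prod_bd : ∏ i, (Real.exp (lam * b i) + Real.exp (lam * -b i))
      ≤ (2 * Real.exp (lam ^ 2 / 2)) ^ m := by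
    calc ∏ i, (Real.exp (lam * b i) + Real.exp (lam * -b i))
        ≤ ∏ _i : Fin m, (2 * Real.exp (lam ^ 2 / 2)) := by
          apply Finset.prod_le_prod
          · intro i _; positivity
          · intro i _; exact factor_bd i
      _ = (2 * Real.exp (lam ^ 2 / 2)) ^ m := by
          rw [Finset.prod_const, Finset.card_univ, Fintype.card_fin]
  have total : (((univ.filter fun ε => s ≤ S ε)).card : ℝ) * Real.exp (lam * s)
      ≤ 2 ^ m * Real.exp (lam ^ 2 * m / 2) := by
    have h5 : (2 * Real.exp (lam ^ 2 / 2)) ^ m = 2 ^ m * Real.exp (lam ^ 2 * m / 2) := by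
      rw [mul_pow, ← Real.exp_nat_mul]
      ring_nf
    calc (((univ.filter fun ε => s ≤ S ε)).card : ℝ) * Real.exp (lam * s)
        ≤ ∑ ε : Fin m → Bool, Real.exp (lam * S ε) := key
      _ = ∏ i, (Real.exp (lam * b i) + Real.exp (lam * -b i)) := expand
      _ ≤ (2 * Real.exp (lam ^ 2 / 2)) ^ m := prod_bd
      _ = 2 ^ m * Real.exp (lam ^ 2 * m / 2) := h5
  have hfin : (((univ.filter fun ε => s ≤ S ε)).card : ℝ)
      ≤ 2 ^ m * Real.exp (lam ^ 2 * m / 2) / Real.exp (lam * s) :=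
    (le_div_iff₀ (Real.exp_pos _)).2 total
  have heq : (2:ℝ) ^ m * Real.exp (lam ^ 2 * m / 2) / Real.exp (lam * s)
      = Real.exp (-(s ^ 2 / (2 * m))) * 2 ^ m := by
    rw [mul_div_assoc, ← Real.exp_sub]
    rw [mul_comm]
    congr 1
    rw [hlamdef]
    field_simp
    ring
  rw [heq] at hfin
  exact hfin

private lemma rad2 {m : ℕ} (hm : 0 < m) (b : Fin m → ℝ) (hb : ∀ i, |b i| ≤ 1)
    {s : ℝ} (hs : 0 < s) :
    (((univ : Finset (Fin m → Bool)).filter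
        fun ε => s ≤ |∑ i, if ε i then b i else -b i|).card : ℝ) ≤
      2 * Real.exp (-(s ^ 2 / (2 * m))) * 2 ^ m := by
  classical
  have h1 := rad1 hm b hb hs
  have h2 := rad1 hm (fun i => -b i) (fun i => by simpa using hb i) hs
  have hneg : ∀ ε : Fin m → Bool, (∑ i, if ε i then -b i else -(-b i))
      = -∑ i, if ε i then b i else -b i := by
    intro ε
    rw [← Finset.sum_neg_distrib]
    apply Finset.sum_congr rfl
    intro i _
    cases h : ε i <;> simp
  have hsub : ((univ : Finset (Fin m → Bool)).filter
        fun ε => s ≤ |∑ i, if ε i then b i else -b i|)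
      ⊆ ((univ : Finset (Fin m → Bool)).filter
          fun ε => s ≤ ∑ i, if ε i then b i else -b i)
        ∪ ((univ : Finset (Fin m → Bool)).filter
            fun ε => s ≤ ∑ i, if ε i then -b i else -(-b i)) := by
    intro ε hε
    simp only [mem_filter, mem_univ, true_and, mem_union] at *
    rcases le_abs.mp hε with h | h
    · left; exact h
    · right; rw [hneg ε]; exact h
  have hcard := Finset.card_le_card hsub
  have hcard2 := Finset.card_union_le
    ((univ : Finset (Fin m → Bool)).filter fun ε => s ≤ ∑ i, if ε i then b i else -b i)
    ((univ : Finset (Fin m → Bool)).filter fun ε => s ≤ ∑ i, if ε i then -b i else -(-b i))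
  have : (((univ : Finset (Fin m → Bool)).filter
      fun ε => s ≤ |∑ i, if ε i then b i else -b i|).card : ℝ)
      ≤ (((univ : Finset (Fin m → Bool)).filter
          fun ε => s ≤ ∑ i, if ε i then b i else -b i).card : ℝ)
        + (((univ : Finset (Fin m → Bool)).filter
            fun ε => s ≤ ∑ i, if ε i then -b i else -(-b i)).card : ℝ) := by
    exact_mod_cast hcard.trans hcard2
  calc (((univ : Finset (Fin m → Bool)).filter
      fun ε => s ≤ |∑ i, if ε i then b i else -b i|).card : ℝ)
      ≤ _ + _ := this
    _ ≤ Real.exp (-(s ^ 2 / (2 * m))) * 2 ^ m + Real.exp (-(s ^ 2 / (2 * m))) * 2 ^ m := by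
        exact add_le_add h1 h2
    _ = 2 * Real.exp (-(s ^ 2 / (2 * m))) * 2 ^ m := by ring

def asg (m : ℕ) (e : Fin (2*m) ≃ Fin m × Bool)
    (d : Equiv.Perm (Fin (2*m)) × (Fin m → Bool)) : Fin (2*m) → Bool :=
  fun j => (e (d.1 j)).2 == d.2 (e (d.1 j)).1

lemma asg_mem (m : ℕ) (e : Fin (2*m) ≃ Fin m × Bool)
    (d : Equiv.Perm (Fin (2*m)) × (Fin m → Bool)) : asg m e d ∈ Assign (2*m) m := by
  obtain ⟨σ, ε⟩ := d
  unfold Assign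
  simp only [mem_filter, mem_univ, true_and]
  have key : (univ.filter fun i => asg m e (σ, ε) i = true).card
      = (univ : Finset (Fin m)).card := by
    refine Finset.card_bij' (i := fun j _ => (e (σ j)).1)
      (j := fun i _ => σ.symm (e.symm (i, ε i))) ?_ ?_ ?_ ?_
    · intro j hj
      exact mem_univ _
    · intro i _
      simp only [mem_filter, mem_univ, true_and, asg]
      simp
    · intro j hj
      simp only [mem_filter, mem_univ, true_and, asg, beq_iff_eq] at hj
      have h2 : ((e (σ j)).1, ε (e (σ j)).1) = e (σ j) := by
        rw [← hj]
      show σ.symm (e.symm ((e (σ j)).1, ε (e (σ j)).1)) = j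
      rw [h2]
      simp
    · intro i _
      simp
  rw [key]
  simp

lemma exists_perm {N : ℕ} (z z' : Fin N → Bool)
    (h : (univ.filter fun j => z j = true).card = (univ.filter fun j => z' j = true).card) :
    ∃ π : Equiv.Perm (Fin N), ∀ j, z (π j) = z' j := by
  classical
  have hc : ∀ (y : Fin N → Bool), (univ.filter fun x => ¬ y x = true).card
      = N - (univ.filter fun x => y x = true).card := by
    intro y
    have h0 := Finset.card_filter_add_card_filter_not
      (s := (univ : Finset (Fin N))) (p := fun x => y x = true)
    simp only [Finset.card_univ, Fintype.card_fin] at h0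
    omega
  have h1 : Fintype.card {j // z' j = true} = Fintype.card {j // z j = true} := by
    simp only [Fintype.card_subtype]
    omega
  have h2 : Fintype.card {j // ¬ z' j = true} = Fintype.card {j // ¬ z j = true} := by
    simp only [Fintype.card_subtype, hc, h]
  let ep := Fintype.equivOfCardEq h1
  let en := Fintype.equivOfCardEq h2
  refine ⟨Equiv.subtypeCongr ep en, ?_⟩
  intro j
  by_cases hj : z' j = true
  · have heval : Equiv.subtypeCongr ep en j = (ep ⟨j, hj⟩ : Fin N) := by
      unfold Equiv.subtypeCongr
      simp only [Equiv.trans_apply, Equiv.sumCongr_apply]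
      rw [Equiv.sumCompl_symm_apply_of_pos (p := fun x => z' x = true) hj]
      simp
    rw [heval, hj]
    exact (ep ⟨j, hj⟩).2
  · have heval : Equiv.subtypeCongr ep en j = (en ⟨j, hj⟩ : Fin N) := by
      unfold Equiv.subtypeCongr
      simp only [Equiv.trans_apply, Equiv.sumCongr_apply]
      rw [Equiv.sumCompl_symm_apply_of_neg (p := fun x => z' x = true) hj]
      simp
    rw [heval]
    have h3 : ¬ z ((en ⟨j, hj⟩ : Fin N)) = true := (en ⟨j, hj⟩).2
    simp only [Bool.not_eq_true] at h3 hj ⊢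
    rw [h3, hj]

lemma fiber_const (m : ℕ) (e : Fin (2*m) ≃ Fin m × Bool) {z z' : Fin (2*m) → Bool}
    (hz : z ∈ Assign (2*m) m) (hz' : z' ∈ Assign (2*m) m) :
    ((univ : Finset (Equiv.Perm (Fin (2*m)) × (Fin m → Bool))).filter
        fun d => asg m e d = z).card =
      ((univ : Finset (Equiv.Perm (Fin (2*m)) × (Fin m → Bool))).filter
        fun d => asg m e d = z').card := by
  classical
  simp only [Assign, mem_filter, mem_univ, true_and] at hz hz'
  obtain ⟨π, hπ⟩ := exists_perm z z' (by rw [hz, hz'])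
  refine Finset.card_bij' (i := fun d _ => (π.trans d.1, d.2))
    (j := fun d _ => (π.symm.trans d.1, d.2)) ?_ ?_ ?_ ?_
  · rintro ⟨σ, ε⟩ hd
    simp only [mem_filter, mem_univ, true_and] at hd ⊢
    funext j
    have h0 : asg m e (π.trans σ, ε) j = asg m e (σ, ε) (π j) := rfl
    rw [h0, hd]
    exact hπ j
  · rintro ⟨σ, ε⟩ hd
    simp only [mem_filter, mem_univ, true_and] at hd ⊢
    funext j
    have h0 : asg m e (π.symm.trans σ, ε) j = asg m e (σ, ε) (π.symm j) := rfl
    rw [h0, hd]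
    have h1 := hπ (π.symm j)
    simpa using h1.symm
  · rintro ⟨σ, ε⟩ _
    show (π.symm.trans (π.trans σ), ε) = (σ, ε)
    have hσ : π.symm.trans (π.trans σ) = σ := by ext j; simp
    rw [hσ]
  · rintro ⟨σ, ε⟩ _
    show (π.trans (π.symm.trans σ), ε) = (σ, ε)
    have hσ : π.trans (π.symm.trans σ) = σ := by ext j; simp
    rw [hσ]

lemma Pr_eq (n m : ℕ) (P : (Fin n → Bool) → Prop) [inst : DecidablePred P] :
    Pr n m P = (((Assign n m).filter P).card : ℝ) / ((Assign n m).card : ℝ) := by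
  unfold Pr
  rw [Finset.filter_congr_decidable]

lemma Pr_mono {n m : ℕ} {P Q : (Fin n → Bool) → Prop} (h : ∀ z, P z → Q z) :
    Pr n m P ≤ Pr n m Q := by
  classical
  rw [Pr_eq, Pr_eq]
  have hsub : (Assign n m).filter P ⊆ (Assign n m).filter Q := by
    intro x hx
    simp only [mem_filter] at hx ⊢
    exact ⟨hx.1, h x hx.2⟩
  have hcard := Finset.card_le_card hsub
  rcases Nat.eq_zero_or_pos (Assign n m).card with h0 | h0
  · simp [h0]
  · have hpos : (0:ℝ) < ((Assign n m).card : ℝ) := by exact_mod_cast h0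
    gcongr

lemma transfer (m : ℕ) (hm : 0 < m) (e : Fin (2*m) ≃ Fin m × Bool)
    (P : (Fin (2*m) → Bool) → Prop) [DecidablePred P] :
    Pr (2*m) m P =
      (((univ : Finset (Equiv.Perm (Fin (2*m)) × (Fin m → Bool))).filter
          fun d => P (asg m e d)).card : ℝ)
        / ((Fintype.card (Equiv.Perm (Fin (2*m)) × (Fin m → Bool))) : ℝ) := by
  classical
  set D := (univ : Finset (Equiv.Perm (Fin (2*m)) × (Fin m → Bool))) with hD
  set z₀ := asg m e (1, fun _ => true) with hz₀
  have hz₀mem : z₀ ∈ Assign (2*m) m := asg_mem m e _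
  set c := (D.filter fun d => asg m e d = z₀).card with hc
  have hfib : ∀ z ∈ Assign (2*m) m, (D.filter fun d => asg m e d = z).card = c :=
    fun z hz => fiber_const m e hz hz₀mem
  have key1 : Fintype.card (Equiv.Perm (Fin (2*m)) × (Fin m → Bool))
      = (Assign (2*m) m).card * c := by
    rw [← Finset.card_univ]
    rw [Finset.card_eq_sum_card_fiberwise (f := asg m e) (t := Assign (2*m) m)
      (fun d _ => asg_mem m e d)]
    rw [Finset.sum_congr rfl hfib, Finset.sum_const, smul_eq_mul]
  have key2 : (D.filter fun d => P (asg m e d)).card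
      = ((Assign (2*m) m).filter P).card * c := by
    rw [Finset.card_eq_sum_card_fiberwise (f := asg m e)
      (t := (Assign (2*m) m).filter P)
      (fun d hd => by
        simp only [mem_filter, mem_univ, true_and, D] at hd ⊢
        exact Finset.mem_filter.2 ⟨asg_mem m e d, by simpa [D] using hd⟩)]
    have hinner : ∀ z ∈ (Assign (2*m) m).filter P,
        ((D.filter fun d => P (asg m e d)).filter fun d => asg m e d = z).card = c := by
      intro z hz
      simp only [mem_filter] at hz
      rw [Finset.filter_filter]
      have heq : (D.filter fun d => P (asg m e d) ∧ asg m e d = z)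
          = D.filter fun d => asg m e d = z := by
        apply Finset.filter_congr
        intro d _
        constructor
        · exact fun h => h.2
        · intro h; exact ⟨h ▸ hz.2, h⟩
      rw [heq]
      exact hfib z hz.1
    rw [Finset.sum_congr rfl hinner, Finset.sum_const, smul_eq_mul]
  have hDpos : 0 < Fintype.card (Equiv.Perm (Fin (2*m)) × (Fin m → Bool)) :=
    Fintype.card_pos
  rw [key1] at hDpos
  have hcpos : 0 < c := by
    rcases Nat.eq_zero_or_pos c with h0 | h0
    · rw [h0, mul_zero] at hDpos; omega
    · exact h0
  rw [Pr_eq, key2, key1]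
  push_cast
  rw [mul_div_mul_right _ _ (show (c:ℝ) ≠ 0 by exact_mod_cast hcpos.ne')]

lemma diff_eq (m : ℕ) (hm : 0 < m) (w : Fin (2*m) → Bool × Bool) (z : Fin (2*m) → Bool) :
    neyman (2*m) m (obsOutcome (2*m) w z) z - sate (2*m) w =
      ((∑ j, (b2r (w j).2 + b2r (w j).1) * b2r (z j))
        - (∑ j, (b2r (w j).2 + b2r (w j).1)) / 2) / m := by
  have hm' : (0:ℝ) < m := by exact_mod_cast hm
  unfold neyman obsOutcome sate
  have e1 : ∀ j, (if z j then b2r (if z j then (w j).2 else (w j).1) else 0)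
      = (if z j then b2r (w j).2 else 0) := by
    intro j; by_cases h : z j <;> simp [h]
  have e2 : ∀ j, (if z j then (0:ℝ) else b2r (if z j then (w j).2 else (w j).1))
      = b2r ((w j).1) - (if z j then b2r (w j).1 else 0) := by
    intro j; by_cases h : z j <;> simp [h]
  have e3 : ∀ j, (b2r (w j).2 + b2r (w j).1) * b2r (z j)
      = (if z j then b2r (w j).2 else 0) + (if z j then b2r (w j).1 else 0) := by
    intro j; by_cases h : z j <;> simp [b2r, h]
  simp_rw [e1, e2, e3, Finset.sum_sub_distrib, Finset.sum_add_distrib]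
  push_cast
  have h2 : (2:ℝ) * (m:ℝ) - m = m := by ring
  rw [h2]
  field_simp
  ring

lemma asg_sum (m : ℕ) (e : Fin (2*m) ≃ Fin m × Bool) (a : Fin (2*m) → ℝ)
    (σ : Equiv.Perm (Fin (2*m))) (ε : Fin m → Bool) :
    (∑ j, a j * b2r (asg m e (σ, ε) j)) - (∑ j, a j) / 2 =
      ∑ i, (if ε i then (a (σ.symm (e.symm (i, true))) - a (σ.symm (e.symm (i, false)))) / 2
            else -((a (σ.symm (e.symm (i, true))) - a (σ.symm (e.symm (i, false)))) / 2)) := by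
  have key : ∀ (f : Fin (2*m) → ℝ), ∑ j, f j = ∑ p : Fin m × Bool, f (σ.symm (e.symm p)) :=
    fun f => (Equiv.sum_comp (σ.trans e).symm f).symm
  rw [Finset.sum_div, ← Finset.sum_sub_distrib]
  rw [key (fun j => a j * b2r (asg m e (σ, ε) j) - a j / 2)]
  rw [Fintype.sum_prod_type]
  apply Finset.sum_congr rfl
  intro i _
  rw [Fintype.sum_bool]
  have hval : ∀ b : Bool, asg m e (σ, ε) (σ.symm (e.symm (i, b))) = (b == ε i) := by
    intro b
    unfold asg
    simp
  rw [hval true, hval false]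
  cases hε : ε i <;> simp [b2r] <;> ring

lemma tail (m : ℕ) (hm : 0 < m) (e : Fin (2*m) ≃ Fin m × Bool)
    (w : Fin (2*m) → Bool × Bool) {t : ℝ} (ht : 0 < t) :
    Pr (2*m) m (fun z => t ≤ |neyman (2*m) m (obsOutcome (2*m) w z) z - sate (2*m) w|) ≤
      2 * Real.exp (-(t ^ 2 * (2 * (m:ℝ)) / 4)) := by
  classical
  have hm' : (0:ℝ) < m := by exact_mod_cast hm
  set a : Fin (2*m) → ℝ := fun j => b2r (w j).2 + b2r (w j).1 with ha
  have hrange : ∀ j, 0 ≤ a j ∧ a j ≤ 2 := by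
    intro j
    rw [ha]
    cases h1 : (w j).1 <;> cases h2 : (w j).2 <;> simp [b2r, h1, h2] <;> norm_num
  have hP : (fun z : Fin (2*m) → Bool =>
        t ≤ |neyman (2*m) m (obsOutcome (2*m) w z) z - sate (2*m) w|)
      = (fun z => (m:ℝ) * t ≤ |(∑ j, a j * b2r (z j)) - (∑ j, a j) / 2|) := by
    funext z
    rw [eq_iff_iff, diff_eq m hm w z, abs_div, abs_of_pos hm', le_div_iff₀ hm', mul_comm]
  rw [hP, transfer m hm e _]
  set s := (m:ℝ) * t with hs
  have hspos : 0 < s := by positivity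
  set b : Equiv.Perm (Fin (2*m)) → Fin m → ℝ := fun σ i =>
    (a (σ.symm (e.symm (i, true))) - a (σ.symm (e.symm (i, false)))) / 2 with hb
  have hbabs : ∀ σ i, |b σ i| ≤ 1 := by
    intro σ i
    have hbv : b σ i = (a (σ.symm (e.symm (i, true))) - a (σ.symm (e.symm (i, false)))) / 2 := rfl
    have h1 := hrange (σ.symm (e.symm (i, true)))
    have h2 := hrange (σ.symm (e.symm (i, false)))
    have habs : ∀ x y : ℝ, 0 ≤ x → x ≤ 2 → 0 ≤ y → y ≤ 2 → |(x - y)/2| ≤ 1 := by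
      intro x y hx1 hx2 hy1 hy2
      rw [abs_le]
      constructor <;> linarith
    rw [hbv]
    exact habs _ _ h1.1 h1.2 h2.1 h2.2
  -- numerator: split the count over σ
  have hsplit : (((univ : Finset (Equiv.Perm (Fin (2*m)) × (Fin m → Bool))).filter
        fun d => s ≤ |(∑ j, a j * b2r (asg m e d j)) - (∑ j, a j) / 2|).card : ℝ)
      ≤ (Fintype.card (Equiv.Perm (Fin (2*m))) : ℝ)
          * (2 * Real.exp (-(s ^ 2 / (2 * m))) * 2 ^ m) := by
    have hcount : ((univ : Finset (Equiv.Perm (Fin (2*m)) × (Fin m → Bool))).filter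
          fun d => s ≤ |(∑ j, a j * b2r (asg m e d j)) - (∑ j, a j) / 2|).card
        = ∑ σ : Equiv.Perm (Fin (2*m)),
            ((univ : Finset (Fin m → Bool)).filter
              fun ε => s ≤ |∑ i, if ε i then b σ i else -(b σ i)|).card := by
      rw [Finset.card_filter]
      rw [Fintype.sum_prod_type]
      apply Finset.sum_congr rfl
      intro σ _
      rw [Finset.card_filter]
      apply Finset.sum_congr rfl
      intro ε _
      congr 1
      rw [eq_iff_iff]
      rw [asg_sum m e a σ ε]
    rw [hcount]
    push_cast
    calc (∑ σ : Equiv.Perm (Fin (2*m)),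
          (((univ : Finset (Fin m → Bool)).filter
            fun ε => s ≤ |∑ i, if ε i then b σ i else -(b σ i)|).card : ℝ))
        ≤ ∑ _σ : Equiv.Perm (Fin (2*m)),
            (2 * Real.exp (-(s ^ 2 / (2 * m))) * 2 ^ m) := by
          apply Finset.sum_le_sum
          intro σ _
          exact rad2 hm (b σ) (hbabs σ) hspos
      _ = (Fintype.card (Equiv.Perm (Fin (2*m))) : ℝ)
            * (2 * Real.exp (-(s ^ 2 / (2 * m))) * 2 ^ m) := by
          rw [Finset.sum_const, nsmul_eq_mul, Finset.card_univ]
  have hDcard : ((Fintype.card (Equiv.Perm (Fin (2*m)) × (Fin m → Bool))) : ℝ)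
      = (Fintype.card (Equiv.Perm (Fin (2*m))) : ℝ) * 2 ^ m := by
    rw [Fintype.card_prod]
    push_cast
    congr 1
    rw [Fintype.card_fun]
    simp
  have hDpos : (0:ℝ) < ((Fintype.card (Equiv.Perm (Fin (2*m)) × (Fin m → Bool))) : ℝ) := by
    exact_mod_cast Fintype.card_pos
  rw [div_le_iff₀ hDpos]
  calc (((univ : Finset (Equiv.Perm (Fin (2*m)) × (Fin m → Bool))).filter
        fun d => s ≤ |(∑ j, a j * b2r (asg m e d j)) - (∑ j, a j) / 2|).card : ℝ)
      ≤ (Fintype.card (Equiv.Perm (Fin (2*m))) : ℝ)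
          * (2 * Real.exp (-(s ^ 2 / (2 * m))) * 2 ^ m) := hsplit
    _ = 2 * Real.exp (-(t ^ 2 * (2 * (m:ℝ)) / 4))
          * ((Fintype.card (Equiv.Perm (Fin (2*m)) × (Fin m → Bool))) : ℝ) := by
        rw [hDcard]
        have hexp : Real.exp (-(s ^ 2 / (2 * m))) = Real.exp (-(t ^ 2 * (2 * (m:ℝ)) / 4)) := by
          congr 1
          rw [hs]
          field_simp
          ring
        rw [hexp]
        ring


/-- In a balanced design: (a) the Neyman estimator satisfies the tail
bound `P(|T(w, Z) − τ(w)| ≥ t) ≤ 2 exp(−t² n / 8)` for every `t > 0`; consequently (b)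
for any observed data, any table `w` with `|T(Y,Z) − τ(w)| ≥ √(8 log(2/α)/n)` has
permutation `p`-value `p(w, Y, Z) < α`. -/
theorem stmt18 (m : ℕ) (hm : 0 < m) (n : ℕ) (hn : n = 2 * m)
    (w : Fin n → Bool × Bool) :
    (∀ t : ℝ, 0 < t →
      Pr n m (fun z => t ≤ |neyman n m (obsOutcome n w z) z - sate n w|) ≤
        2 * Real.exp (-(t ^ 2 * (n : ℝ) / 8))) ∧
      ∀ α : ℝ, 0 < α → α < 1 → ∀ Y z : Fin n → Bool, z ∈ Assign n m →
        Real.sqrt (8 * Real.log (2 / α) / (n : ℝ)) ≤ |neyman n m Y z - sate n w| →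
        pval n m w Y z < α := by
  subst hn
  have e : Fin (2*m) ≃ Fin m × Bool := Fintype.equivOfCardEq (by simp; omega)
  have hm' : (0:ℝ) < m := by exact_mod_cast hm
  have hcast : ((2*m : ℕ) : ℝ) = 2 * (m:ℝ) := by push_cast; ring
  constructor
  · intro t ht
    have h1 := tail m hm e w ht
    have h2 : 2 * Real.exp (-(t ^ 2 * (2 * (m:ℝ)) / 4))
        ≤ 2 * Real.exp (-(t ^ 2 * ((2*m : ℕ) : ℝ) / 8)) := by
      rw [hcast]
      have hx : (0:ℝ) ≤ t ^ 2 * (2 * (m:ℝ)) := by positivity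
      have hexp := Real.exp_le_exp.2
        (show -(t ^ 2 * (2 * (m:ℝ)) / 4) ≤ -(t ^ 2 * (2 * (m:ℝ)) / 8) by linarith)
      linarith
    exact h1.trans h2
  · intro α hα0 hα1 Y z hz hge
    set L := Real.log (2 / α) with hL
    have hLpos : 0 < L := Real.log_pos (by rw [lt_div_iff₀ hα0]; linarith)
    set t₀ := Real.sqrt (8 * L / ((2*m : ℕ) : ℝ)) with ht₀def
    have harg : 0 < 8 * L / ((2*m : ℕ) : ℝ) := by
      rw [hcast]; positivity
    have ht₀ : 0 < t₀ := Real.sqrt_pos.2 harg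
    have hsq : t₀ ^ 2 = 8 * L / ((2*m : ℕ) : ℝ) := Real.sq_sqrt harg.le
    have hmono : pval (2*m) m w Y z ≤ Pr (2*m) m
        (fun z' => t₀ ≤ |neyman (2*m) m (obsOutcome (2*m) w z') z' - sate (2*m) w|) := by
      unfold pval
      apply Pr_mono
      intro z' hz'
      exact le_trans hge hz'
    have htail := tail m hm e w ht₀
    have hval : 2 * Real.exp (-(t₀ ^ 2 * (2 * (m:ℝ)) / 4)) = α ^ 2 / 2 := by
      rw [hsq, hcast]
      have h8 : -(8 * L / (2 * (m:ℝ)) * (2 * (m:ℝ)) / 4) = -(2 * L) := by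
        field_simp
        ring
      rw [h8]
      have hexp2 : Real.exp (-(2*L)) = (α/2) * (α/2) := by
        rw [show -(2*L) = -L + -L by ring, Real.exp_add]
        have hexp1 : Real.exp (-L) = α / 2 := by
          rw [hL, Real.exp_neg, Real.exp_log (by positivity), inv_div]
        rw [hexp1]
      rw [hexp2]; ring
    have hfin : pval (2*m) m w Y z ≤ α^2/2 := hmono.trans (by rw [← hval]; exact htail)
    nlinarith
end

section
/- A potential outcome table w with count vector v = (v₁₁, v₁₀, v₀₁, v₀₀) is possible given the observed count vector n⃗ = (n₁₁, n₁₀, n₀₁, n₀₀) if and only if max(0, n₁₁ − v₁₀, v₁₁ − n₀₁, v₁₁ + v₀₁ − n₁₀ − n₀₁) ≤ min(v₁₁, n₁₁, v₁₁ + v₀₁ − n₀₁, n − v₁₀ − n₀₁ − n₁₀). -/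
open Finset

private lemma split_card {n : ℕ} (p : Fin n → Bool) (q : Fin n → Prop) [DecidablePred q] :
    (univ.filter q).card =
      (univ.filter fun j => q j ∧ p j = true).card +
      (univ.filter fun j => q j ∧ p j = false).card := by
  rw [← Finset.card_filter_add_card_filter_not (p := fun j => p j = true)
      (s := univ.filter q), Finset.filter_filter, Finset.filter_filter]
  simp only [Bool.not_eq_true]

-- atoms
private def atom {n : ℕ} (Y z : Fin n → Bool) (w : Fin n → Bool × Bool) (zv yv fv : Bool) : ℕ :=
  (univ.filter fun j => z j = zv ∧ Y j = yv ∧ (if z j then (w j).1 else (w j).2) = fv).card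

private lemma ncount_eq {n : ℕ} (Y z : Fin n → Bool) (w : Fin n → Bool × Bool) (zv yv : Bool) :
    ncount n Y z zv yv = atom Y z w zv yv true + atom Y z w zv yv false := by
  unfold ncount atom
  rw [split_card (p := fun j => if z j then (w j).1 else (w j).2)
      (q := fun j => z j = zv ∧ Y j = yv)]
  simp only [and_assoc]

private lemma vcount_eq {n : ℕ} (Y z : Fin n → Bool) (w : Fin n → Bool × Bool)
    (hw : PossibleTable n w Y z) (a b : Bool) :
    vcount n w a b = atom Y z w true a b + atom Y z w false b a := by
  unfold vcount atom
  rw [split_card (p := z) (q := fun j => (w j).2 = a ∧ (w j).1 = b)]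
  congr 1
  all_goals refine congrArg Finset.card (Finset.filter_congr fun j _ => ?_)
  · rcases hzj : z j with _ | _
    · simp [hzj]
    · have h2 := (hw j).1 hzj
      simp [hzj, h2] <;> tauto
  · rcases hzj : z j with _ | _
    · have h1 := (hw j).2 hzj
      simp [hzj, h1] <;> tauto
    · simp [hzj]

private lemma ncount_total {n : ℕ} (Y z : Fin n → Bool) :
    ncount n Y z true true + ncount n Y z true false
      + ncount n Y z false true + ncount n Y z false false = n := by
  unfold ncount
  have h3 := split_card (n := n) z (fun _ => True)
  have h1 := split_card (n := n) Y (fun j => z j = true)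
  have h2 := split_card (n := n) Y (fun j => z j = false)
  simp only [Finset.filter_true, Finset.card_univ, Fintype.card_fin, true_and] at h3
  have e1 : (univ.filter fun j : Fin n => z j = true ∧ Y j = true).card
      = (univ.filter fun j : Fin n => Y j = true ∧ z j = true).card := by
    exact congrArg Finset.card (Finset.filter_congr fun j _ => by tauto)
  have e2 : (univ.filter fun j : Fin n => z j = true ∧ Y j = false).card
      = (univ.filter fun j : Fin n => Y j = false ∧ z j = true).card := by
    exact congrArg Finset.card (Finset.filter_congr fun j _ => by tauto)
  have e3 : (univ.filter fun j : Fin n => z j = false ∧ Y j = true).card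
      = (univ.filter fun j : Fin n => Y j = true ∧ z j = false).card := by
    exact congrArg Finset.card (Finset.filter_congr fun j _ => by tauto)
  have e4 : (univ.filter fun j : Fin n => z j = false ∧ Y j = false).card
      = (univ.filter fun j : Fin n => Y j = false ∧ z j = false).card := by
    exact congrArg Finset.card (Finset.filter_congr fun j _ => by tauto)
  omega

/-- Li–Ding criterion. A count vector `v = (v₁₁, v₁₀, v₀₁, v₀₀)` is
possible given the observed count vector `n⃗ = (n₁₁, n₁₀, n₀₁, n₀₀)` (i.e. some table
possible given the observed data has these counts) if and only if
`max(0, n₁₁ − v₁₀, v₁₁ − n₀₁, v₁₁ + v₀₁ − n₁₀ − n₀₁)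
  ≤ min(v₁₁, n₁₁, v₁₁ + v₀₁ − n₀₁, n − v₁₀ − n₀₁ − n₁₀)`. -/
theorem stmt19 (n m : ℕ) (hm : 0 < m) (hmn : m < n)
    (Y z : Fin n → Bool) (hz : z ∈ Assign n m)
    (v11 v10 v01 v00 : ℕ) (hsum : v11 + v10 + v01 + v00 = n) :
    (∃ w : Fin n → Bool × Bool, PossibleTable n w Y z ∧
        vcount n w true true = v11 ∧ vcount n w true false = v10 ∧
        vcount n w false true = v01 ∧ vcount n w false false = v00) ↔
      max (max 0 ((ncount n Y z true true : ℤ) - (v10 : ℤ)))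
          (max ((v11 : ℤ) - (ncount n Y z false true : ℤ))
            ((v11 : ℤ) + (v01 : ℤ) - (ncount n Y z true false : ℤ) -
              (ncount n Y z false true : ℤ))) ≤
        min (min (v11 : ℤ) (ncount n Y z true true : ℤ))
          (min ((v11 : ℤ) + (v01 : ℤ) - (ncount n Y z false true : ℤ))
            ((n : ℤ) - (v10 : ℤ) - (ncount n Y z false true : ℤ) -
              (ncount n Y z true false : ℤ))) := by
  constructor
  · rintro ⟨w, hw, h11, h10, h01, h00⟩
    have e1 := ncount_eq Y z w true true
    have e2 := ncount_eq Y z w true false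
    have e3 := ncount_eq Y z w false true
    have e4 := ncount_eq Y z w false false
    have f1 := vcount_eq Y z w hw true true
    have f2 := vcount_eq Y z w hw true false
    have f3 := vcount_eq Y z w hw false true
    have f4 := vcount_eq Y z w hw false false
    have t := ncount_total Y z
    omega
  · rintro h
    have htot := ncount_total Y z
    obtain ⟨x, h1, h2, h3, h4, h5, h6, h7⟩ :
        ∃ x : ℕ, x ≤ ncount n Y z true true ∧ x ≤ v11 ∧ v11 ≤ x + ncount n Y z false true ∧
          ncount n Y z false true + x ≤ v11 + v01 ∧
          v11 + v01 ≤ ncount n Y z false true + x + ncount n Y z true false ∧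
          ncount n Y z true true ≤ v10 + x ∧
          v10 + x ≤ ncount n Y z true true + ncount n Y z false false := by
      refine ⟨(max (max 0 ((ncount n Y z true true : ℤ) - (v10 : ℤ)))
            (max ((v11 : ℤ) - (ncount n Y z false true : ℤ))
              ((v11 : ℤ) + (v01 : ℤ) - (ncount n Y z true false : ℤ) -
                (ncount n Y z false true : ℤ)))).toNat, ?_⟩
      omega
    obtain ⟨X, hXs, hXc⟩ := Finset.exists_subset_card_eq
      (s := (univ.filter fun j => z j = true ∧ Y j = true)) (n := x) h1
    obtain ⟨A, hAs, hAc⟩ := Finset.exists_subset_card_eq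
      (s := (univ.filter fun j => z j = true ∧ Y j = false)) (n := v11 + v01 - ncount n Y z false true - x)
      (by show _ ≤ ncount n Y z true false; omega)
    obtain ⟨B, hBs, hBc⟩ := Finset.exists_subset_card_eq
      (s := (univ.filter fun j => z j = false ∧ Y j = true)) (n := v11 - x)
      (by show _ ≤ ncount n Y z false true; omega)
    obtain ⟨C, hCs, hCc⟩ := Finset.exists_subset_card_eq
      (s := (univ.filter fun j => z j = false ∧ Y j = false)) (n := v10 + x - ncount n Y z true true)
      (by show _ ≤ ncount n Y z false false; omega)
    have hXj : ∀ j, j ∈ X → z j = true ∧ Y j = true := fun j hj => (mem_filter.mp (hXs hj)).2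
    have hAj : ∀ j, j ∈ A → z j = true ∧ Y j = false := fun j hj => (mem_filter.mp (hAs hj)).2
    have hBj : ∀ j, j ∈ B → z j = false ∧ Y j = true := fun j hj => (mem_filter.mp (hBs hj)).2
    have hCj : ∀ j, j ∈ C → z j = false ∧ Y j = false := fun j hj => (mem_filter.mp (hCs hj)).2
    set W : Fin n → Bool × Bool := fun j =>
      (if z j then decide (j ∈ X ∪ A ∪ B ∪ C) else Y j,
       if z j then Y j else decide (j ∈ X ∪ A ∪ B ∪ C)) with hW
    have hposs : PossibleTable n W Y z := by
      intro j
      constructor <;> intro hz <;> simp [hW, hz]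
    have afree : ∀ j, (if z j then (W j).1 else (W j).2) = decide (j ∈ X ∪ A ∪ B ∪ C) := by
      intro j
      by_cases hz : z j = true <;> simp [hW, hz]
    have aT : ∀ (zv yv : Bool) (U : Finset (Fin n)),
        (∀ j, j ∈ U ↔ (z j = zv ∧ Y j = yv ∧ j ∈ X ∪ A ∪ B ∪ C)) →
        atom Y z W zv yv true = U.card := by
      intro zv yv U hU
      unfold atom
      apply congrArg
      ext j
      simp only [mem_filter, mem_univ, true_and, afree j, decide_eq_true_eq]
      rw [hU j]
    have memX : ∀ j, j ∈ X ↔ (z j = true ∧ Y j = true ∧ j ∈ X ∪ A ∪ B ∪ C) := by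
      intro j
      constructor
      · intro hj; exact ⟨(hXj j hj).1, (hXj j hj).2, by simp [Finset.mem_union, hj]⟩
      · rintro ⟨hz, hY, hu⟩
        simp only [Finset.mem_union] at hu
        rcases hu with ((hj|hj)|hj)|hj
        · exact hj
        · have := (hAj j hj).2; rw [hY] at this; simp at this
        · have := (hBj j hj).1; rw [hz] at this; simp at this
        · have := (hCj j hj).1; rw [hz] at this; simp at this
    have memA : ∀ j, j ∈ A ↔ (z j = true ∧ Y j = false ∧ j ∈ X ∪ A ∪ B ∪ C) := by
      intro j
      constructor
      · intro hj; exact ⟨(hAj j hj).1, (hAj j hj).2, by simp [Finset.mem_union, hj]⟩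
      · rintro ⟨hz, hY, hu⟩
        simp only [Finset.mem_union] at hu
        rcases hu with ((hj|hj)|hj)|hj
        · have := (hXj j hj).2; rw [hY] at this; simp at this
        · exact hj
        · have := (hBj j hj).1; rw [hz] at this; simp at this
        · have := (hCj j hj).1; rw [hz] at this; simp at this
    have memB : ∀ j, j ∈ B ↔ (z j = false ∧ Y j = true ∧ j ∈ X ∪ A ∪ B ∪ C) := by
      intro j
      constructor
      · intro hj; exact ⟨(hBj j hj).1, (hBj j hj).2, by simp [Finset.mem_union, hj]⟩
      · rintro ⟨hz, hY, hu⟩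
        simp only [Finset.mem_union] at hu
        rcases hu with ((hj|hj)|hj)|hj
        · have := (hXj j hj).1; rw [hz] at this; simp at this
        · have := (hAj j hj).1; rw [hz] at this; simp at this
        · exact hj
        · have := (hCj j hj).2; rw [hY] at this; simp at this
    have memC : ∀ j, j ∈ C ↔ (z j = false ∧ Y j = false ∧ j ∈ X ∪ A ∪ B ∪ C) := by
      intro j
      constructor
      · intro hj; exact ⟨(hCj j hj).1, (hCj j hj).2, by simp [Finset.mem_union, hj]⟩
      · rintro ⟨hz, hY, hu⟩
        simp only [Finset.mem_union] at hu
        rcases hu with ((hj|hj)|hj)|hj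
        · have := (hXj j hj).1; rw [hz] at this; simp at this
        · have := (hAj j hj).1; rw [hz] at this; simp at this
        · have := (hBj j hj).2; rw [hY] at this; simp at this
        · exact hj
    have aX := aT true true X memX
    have aA := aT true false A memA
    have aB := aT false true B memB
    have aC := aT false false C memC
    rw [hXc] at aX; rw [hAc] at aA; rw [hBc] at aB; rw [hCc] at aC
    have e1 := ncount_eq Y z W true true
    have e2 := ncount_eq Y z W true false
    have e3 := ncount_eq Y z W false true
    have e4 := ncount_eq Y z W false false
    refine ⟨W, hposs, ?_, ?_, ?_, ?_⟩ <;> rw [vcount_eq Y z W hposs] <;> omega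
end
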